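/- Let m be a nonnegative integer. Then (-1)^{m+1} · 2 · (1 - 3^{-2m-1}) · λ(2m+2) = π^{2m+2}/(3^{2m+1}·(2m+1)!) + 4·Σ_{k=0}^{m} (-1)^{k+1} · π^{2m-2k}/(3^{2m-2k}·(2m-2k)!) · λ(2k+2). -/

import Mathlib

open Real Finset

/-- The Dirichlet lambda function at a natural-number argument `j`:
`λ(j) = ∑_{n=0}^∞ 1/(2n+1)^j`. -/
noncomputable def dirichletLambda (j : ℕ) : ℝ := ∑' n : ℕ, 1 / (2 * (n : ℝ) + 1) ^ j

namespace LambdaAux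
open PowerSeries

/-- The key rational sequence: `λ(2j) = (-1)^{j+1} π^{2j} sQ j`. -/
def sQ (j : ℕ) : ℚ := ((4:ℚ) ^ j - 1) * bernoulli (2 * j) / (2 * (2 * j).factorial)

noncomputable def B : ℚ⟦X⟧ := bernoulliPowerSeries ℚ
noncomputable def E : ℚ⟦X⟧ := PowerSeries.exp ℚ
noncomputable def Em : ℚ⟦X⟧ := rescale (-1 : ℚ) E
noncomputable def E3 : ℚ⟦X⟧ := rescale (3 : ℚ) E
noncomputable def V : ℚ⟦X⟧ := 2 * rescale (2 : ℚ) B - 2 * B + X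
noncomputable def V3 : ℚ⟦X⟧ := rescale (3 : ℚ) V

lemma h1 : E * Em = 1 := by
  have := exp_mul_exp_eq_exp_add (1 : ℚ) (-1)
  simpa [E, Em, rescale_one, rescale_zero] using this

lemma hE2 : rescale (2:ℚ) E = E * E := by
  have := exp_mul_exp_eq_exp_add (1 : ℚ) 1
  norm_num [rescale_one] at this
  rw [E, ← this]

lemma hE3 : E3 = E * E * E := by
  have := exp_mul_exp_eq_exp_add (2 : ℚ) 1
  norm_num [rescale_one] at this
  rw [E3, E, ← this]
  show rescale (2:ℚ) E * E = E * E * E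
  rw [hE2]

lemma hBid : B * (E - 1) = X := bernoulliPowerSeries_mul_exp_sub_one ℚ

lemma hB2 : rescale (2:ℚ) B * (E * E - 1) = 2 * X := by
  have := congrArg (rescale (2:ℚ)) hBid
  rw [map_mul, map_sub, map_one, hE2, rescale_X] at this
  rw [this]
  norm_num
  rw [show ((C (R := ℚ)) 2 : ℚ⟦X⟧) = 2 by simp [map_ofNat]]

lemma hEne : E - 1 ≠ 0 := fun h => by
  have := congrArg (PowerSeries.coeff (R := ℚ) 1) h
  simp [E] at this

lemma L1 : V * (E + 1) = X * (E - 1) := by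
  apply mul_left_cancel₀ hEne
  rw [V]
  linear_combination (2 : ℚ⟦X⟧) * hB2 - 2 * (E + 1) * hBid

lemma L3 : V3 * (E3 + 1) = 3 * (X * (E3 - 1)) := by
  have := congrArg (rescale (3:ℚ)) L1
  rw [map_mul, map_mul, map_add, map_sub, map_one, rescale_X] at this
  rw [V3, E3]
  show rescale (3:ℚ) V * (rescale (3:ℚ) E + 1) = 3 * (X * (rescale (3:ℚ) E - 1))
  rw [this, show ((C (R := ℚ)) 3 : ℚ⟦X⟧) = 3 by simp [map_ofNat]]
  ring

lemma hWne : (E + 1) * (E3 + 1) * E ≠ 0 := fun h => by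
  have := congrArg (PowerSeries.constantCoeff (R := ℚ)) h
  have h0 : ∀ f : ℚ⟦X⟧, PowerSeries.constantCoeff (R := ℚ) (rescale (3:ℚ) f) = PowerSeries.constantCoeff (R := ℚ) f := by
    intro f
    rw [← coeff_zero_eq_constantCoeff_apply, ← coeff_zero_eq_constantCoeff_apply, coeff_rescale]
    simp
  simp [E, E3, h0] at this

lemma MAIN : 3 * V - V3 = 3 * (X * (E - Em)) - V3 * (E + Em) := by
  apply mul_left_cancel₀ hWne
  linear_combination (3 * E * (E3 + 1)) * L1 + (E * (E + 1) * (E + Em - 1)) * L3 +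
    (6 * X * E * (E3 + E * E)) * h1 + (6 * X * E * Em) * hE3


lemma coeffB (n : ℕ) : PowerSeries.coeff (R := ℚ) n B = bernoulli n / n.factorial := by
  simp [B, bernoulliPowerSeries]

lemma coeffE (n : ℕ) : PowerSeries.coeff (R := ℚ) n E = 1 / n.factorial := by
  simp [E]

lemma coeffEm (n : ℕ) : PowerSeries.coeff (R := ℚ) n Em = (-1)^n / n.factorial := by
  simp [Em, coeff_rescale, coeffE]
  ring

lemma coeffV (n : ℕ) :
    PowerSeries.coeff (R := ℚ) n V
      = 2 * ((2:ℚ)^n - 1) * (bernoulli n / n.factorial) + (if n = 1 then 1 else 0) := by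
  rw [V, show (2:ℚ⟦X⟧) = C (R := ℚ) 2 from (map_ofNat _ 2).symm]
  simp [coeff_rescale, coeffB, PowerSeries.coeff_X, coeff_C_mul]
  ring

lemma cV0 : PowerSeries.coeff (R := ℚ) 0 V = 0 := by simp [coeffV]

lemma cVodd (k : ℕ) : PowerSeries.coeff (R := ℚ) (2*k+1) V = 0 := by
  rcases Nat.eq_zero_or_pos k with hk | hk
  · subst hk; norm_num [coeffV]
  · rw [coeffV, bernoulli_eq_bernoulli'_of_ne_one (by omega),
      bernoulli'_eq_zero_of_odd ⟨k, by omega⟩ (by omega)]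
    simp
    omega

lemma cVeven (k : ℕ) : PowerSeries.coeff (R := ℚ) (2*k+2) V = 4 * sQ (k+1) := by
  rw [coeffV, sQ, if_neg (by omega)]
  have h : (2:ℚ)^(2*k+2) = 4^(k+1) := by
    rw [show 2*k+2 = 2*(k+1) by ring, pow_mul]; norm_num
  rw [show 2*(k+1) = 2*k+2 by ring, h]
  have : ((2*k+2).factorial : ℚ) ≠ 0 := Nat.cast_ne_zero.mpr (Nat.factorial_ne_zero _)
  field_simp
  ring


lemma sum_even_shift {M : Type*} [AddCommMonoid M] (h : ℕ → M) (h0 : h 0 = 0)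
    (hodd : ∀ i, h (2*i+1) = 0) (m : ℕ) :
    ∑ i ∈ range (2*m+3), h i = ∑ k ∈ range (m+1), h (2*k+2) := by
  induction m with
  | zero =>
      have h1 := hodd 0
      norm_num at h1
      norm_num [Finset.sum_range_succ, h0, h1]
  | succ m ih =>
      have e1 : 2*(m+1)+3 = (2*m+3)+1+1 := by ring
      rw [e1, Finset.sum_range_succ, Finset.sum_range_succ, ih,
        show 2*m+3 = 2*(m+1)+1 by ring, hodd, Finset.sum_range_succ]
      rw [Finset.sum_range_succ, Finset.sum_range_succ,
        show 2*m+3+1 = 2*(m+1)+2 by ring, add_zero]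


lemma cprod (m : ℕ) :
    PowerSeries.coeff (R := ℚ) (2*m+2) (V3 * (E + Em))
      = ∑ k ∈ range (m+1), (3:ℚ)^(2*k+2) * (4 * sQ (k+1)) * (2 / ((2*m-2*k).factorial : ℚ)) := by
  rw [PowerSeries.coeff_mul, Finset.Nat.sum_antidiagonal_eq_sum_range_succ_mk]
  rw [sum_even_shift (fun i => PowerSeries.coeff (R := ℚ) i V3 * PowerSeries.coeff (R := ℚ) (2*m+2-i) (E + Em))
    (by simp [V3, coeff_rescale, cV0]) (fun i => by simp [V3, coeff_rescale, cVodd]) m]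
  refine Finset.sum_congr rfl (fun k hk => ?_)
  have hkm : k ≤ m := by simpa using Nat.lt_succ_iff.mp (Finset.mem_range.mp hk)
  have hsub : 2*m+2-(2*k+2) = 2*(m-k) := by omega
  rw [V3, coeff_rescale, cVeven, hsub, map_add, coeffE, coeffEm, pow_mul]
  rw [show 2*(m-k) = 2*m-2*k by omega, show ((-1:ℚ)^2) = 1 by norm_num, one_pow]
  ring

lemma key (m : ℕ) :
    (-2) * ((3:ℚ)^(2*m+1) - 1) * sQ (m+1)
      = 1 / ((2*m+1).factorial : ℚ)
        - 4 * ∑ k ∈ range (m+1), 3^(2*k+1) * sQ (k+1) / ((2*m-2*k).factorial : ℚ) := by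
  have h := congrArg (PowerSeries.coeff (R := ℚ) (2*m+2)) MAIN
  rw [map_sub, map_sub, cprod] at h
  rw [show (3:ℚ⟦X⟧) = C (R := ℚ) 3 from (map_ofNat _ 3).symm, coeff_C_mul, coeff_C_mul] at h
  rw [show (2*m+2) = (2*m+1)+1 from rfl, PowerSeries.coeff_succ_X_mul, map_sub, coeffE, coeffEm] at h
  rw [show (2*m+1)+1 = 2*m+2 from rfl, V3, coeff_rescale, cVeven] at h
  have hsum : ∑ k ∈ range (m+1), (3:ℚ)^(2*k+2) * (4 * sQ (k+1)) * (2 / ((2*m-2*k).factorial : ℚ))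
      = 24 * ∑ k ∈ range (m+1), 3^(2*k+1) * sQ (k+1) / ((2*m-2*k).factorial : ℚ) := by
    rw [Finset.mul_sum]
    refine Finset.sum_congr rfl (fun k _ => ?_)
    rw [pow_succ]
    ring
  rw [hsum, show ((-1:ℚ))^(2*m+1) = -1 from Odd.neg_one_pow ⟨m, by ring⟩] at h
  rw [show (3:ℚ)^(2*m+2) = 3^(2*m+1) * 3 by rw [pow_succ]] at h
  linear_combination (1/6 : ℚ) * h


set_option maxHeartbeats 2000000 in
lemma lambda_closed (k : ℕ) :
    dirichletLambda (2*k+2) = (-1 : ℝ)^k * π^(2*k+2) * ((sQ (k+1) : ℚ) : ℝ) := by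
  have hZ := hasSum_zeta_nat (Nat.succ_ne_zero k)
  set Z : ℝ := (-1 : ℝ)^(k+1+1) * 2^(2*(k+1)-1) * π^(2*(k+1)) * (bernoulli (2*(k+1)) : ℝ)
      / (2*(k+1)).factorial with hZdef
  have heven : HasSum (fun n : ℕ => 1/(((2*n : ℕ)) : ℝ)^(2*(k+1))) (((2:ℝ)^(2*(k+1)))⁻¹ * Z) := by
    have h2 := hZ.mul_left ((2:ℝ)^(2*(k+1)))⁻¹
    have hfun : (fun n : ℕ => ((2:ℝ)^(2*(k+1)))⁻¹ * (1/(n:ℝ)^(2*(k+1))))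
        = fun n : ℕ => 1/(((2*n : ℕ)) : ℝ)^(2*(k+1)) := by
      funext n
      push_cast
      rw [mul_pow, one_div, one_div, mul_inv]
    exact hfun ▸ h2
  have hodds : Summable ((fun n : ℕ => 1/((n : ℕ) : ℝ)^(2*(k+1))) ∘ (fun n : ℕ => 2*n+1)) :=
    Summable.comp_injective (i := fun n : ℕ => 2*n+1) hZ.summable (fun a b hab => by simp only at hab; omega)
  have hoddsum : HasSum (fun n : ℕ => 1/(((2*n+1 : ℕ)) : ℝ)^(2*(k+1)))
      (∑' n : ℕ, ((fun n : ℕ => 1/((n : ℕ) : ℝ)^(2*(k+1))) ∘ (fun n : ℕ => 2*n+1)) n) := by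
    have := hodds.hasSum
    exact this
  have htot := HasSum.even_add_odd (f := fun n : ℕ => 1/((n : ℕ) : ℝ)^(2*(k+1))) heven hoddsum
  have hval : ((2:ℝ)^(2*(k+1)))⁻¹ * Z
      + ∑' n : ℕ, ((fun n : ℕ => 1/((n : ℕ) : ℝ)^(2*(k+1))) ∘ (fun n : ℕ => 2*n+1)) n = Z :=
    htot.unique hZ
  have hdL : dirichletLambda (2*k+2)
      = ∑' n : ℕ, ((fun n : ℕ => 1/((n : ℕ) : ℝ)^(2*(k+1))) ∘ (fun n : ℕ => 2*n+1)) n := by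
    rw [dirichletLambda]
    congr 1
    funext n
    simp only [Function.comp_apply]
    push_cast
    rw [show 2*(k+1) = 2*k+2 from by ring]
  rw [hdL, eq_sub_of_add_eq' hval, hZdef, sQ]
  push_cast
  simp only [show 2*(k+1) = 2*k+2 from by ring, show (2*k+2)-1 = 2*k+1 from by omega,
    show (-1:ℝ)^(k+1+1) = (-1)^k from by rw [pow_succ, pow_succ]; ring]
  have h2 : (2:ℝ)^(2*k+2) = 2^(2*k+1)*2 := by rw [← pow_succ]
  have h4 : (4:ℝ)^(k+1) = 2^(2*k+2) := by
    rw [show (4:ℝ) = 2^2 from by norm_num, ← pow_mul, show 2*(k+1) = 2*k+2 from by ring]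
  have hfact : ((2*k+2).factorial : ℝ) ≠ 0 := Nat.cast_ne_zero.mpr (Nat.factorial_ne_zero _)
  have ht : (2:ℝ)^(2*k+1) ≠ 0 := by positivity
  rw [h4, h2]
  field_simp


lemma hkeyR (m : ℕ) : (-2:ℝ) * ((3:ℝ)^(2*m+1) - 1) * ((sQ (m+1) : ℚ):ℝ)
    = 1/(((2*m+1).factorial : ℕ) : ℝ)
      - 4 * ∑ k ∈ Finset.range (m+1),
          (3:ℝ)^(2*k+1) * ((sQ (k+1):ℚ):ℝ) / (((2*m-2*k).factorial : ℕ) : ℝ) := by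
  have h := congrArg (fun q : ℚ => (q : ℝ)) (key m)
  push_cast at h
  linear_combination h

end LambdaAux

open LambdaAux in
theorem lambda_recurrence_third (m : ℕ) :
    (-1 : ℝ) ^ (m + 1) * 2 * (1 - (3 : ℝ) ^ (-(2 * (m : ℤ)) - 1)) * dirichletLambda (2 * m + 2) =
      π ^ (2 * m + 2) / (3 ^ (2 * m + 1) * (Nat.factorial (2 * m + 1))) +
        4 * ∑ k ∈ Finset.range (m + 1),
          (-1 : ℝ) ^ (k + 1) *
            (π ^ (2 * m - 2 * k) / (3 ^ (2 * m - 2 * k) * (Nat.factorial (2 * m - 2 * k)))) *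
              dirichletLambda (2 * k + 2) := by
  have hPne : ((3:ℝ)^(2*m+1)) ≠ 0 := by positivity
  have hPinv : (3:ℝ)^(2*m+1) * ((3:ℝ)^(2*m+1))⁻¹ = 1 := mul_inv_cancel₀ hPne
  have hz : (3:ℝ)^(-(2*(m:ℤ))-1) = ((3:ℝ)^(2*m+1))⁻¹ := by
    rw [← zpow_natCast (3:ℝ) (2*m+1), ← zpow_neg]
    congr 1
    push_cast
    ring
  simp only [lambda_closed]
  rw [hz]
  have hsum : ∑ k ∈ Finset.range (m+1),
        (-1:ℝ)^(k+1) * (π^(2*m-2*k)/(3^(2*m-2*k) * ((Nat.factorial (2*m-2*k) : ℕ) : ℝ)))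
          * ((-1:ℝ)^k * π^(2*k+2) * ((sQ (k+1):ℚ):ℝ))
      = -(π^(2*m+2) * ((3:ℝ)^(2*m+1))⁻¹)
          * ∑ k ∈ Finset.range (m+1),
              (3:ℝ)^(2*k+1) * ((sQ (k+1):ℚ):ℝ) / (((2*m-2*k).factorial : ℕ) : ℝ) := by
    rw [Finset.mul_sum]
    refine Finset.sum_congr rfl (fun k hk => ?_)
    have hkm : k ≤ m := Nat.lt_succ_iff.mp (Finset.mem_range.mp hk)
    have hsign : (-1:ℝ)^(k+1) * (-1:ℝ)^k = -1 := by
      rw [← pow_add]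
      exact Odd.neg_one_pow ⟨k, by ring⟩
    have hπ : π^(2*m-2*k) * π^(2*k+2) = π^(2*m+2) := by
      rw [← pow_add]; congr 1; omega
    have h3 : (3:ℝ)^(2*m-2*k) * (3:ℝ)^(2*k+1) = (3:ℝ)^(2*m+1) := by
      rw [← pow_add]; congr 1; omega
    have hFne : (((2*m-2*k).factorial : ℕ) : ℝ) ≠ 0 :=
      Nat.cast_ne_zero.mpr (Nat.factorial_ne_zero _)
    have h3a : ((3:ℝ)^(2*m-2*k)) ≠ 0 := by positivity
    have h3b : ((3:ℝ)^(2*k+1)) ≠ 0 := by positivity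
    have hinv : ((3:ℝ)^(2*m-2*k))⁻¹ = 3^(2*k+1) * ((3:ℝ)^(2*m+1))⁻¹ := by
      rw [← h3, mul_inv]
      field_simp
    have hre : (-1:ℝ)^(k+1) * (π^(2*m-2*k)/(3^(2*m-2*k) * ((Nat.factorial (2*m-2*k) : ℕ) : ℝ)))
          * ((-1:ℝ)^k * π^(2*k+2) * ((sQ (k+1):ℚ):ℝ))
        = ((-1:ℝ)^(k+1) * (-1:ℝ)^k) * ((π^(2*m-2*k) * π^(2*k+2))
            * (((sQ (k+1):ℚ):ℝ) * ((3:ℝ)^(2*m-2*k))⁻¹ * (((Nat.factorial (2*m-2*k) : ℕ) : ℝ))⁻¹)) := by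
      ring
    rw [hre, hsign, hπ, hinv]
    ring
  rw [hsum]
  have hsignm : (-1:ℝ)^(m+1) * (-1:ℝ)^m = -1 := by
    rw [← pow_add]
    exact Odd.neg_one_pow ⟨m, by ring⟩
  linear_combination (π^(2*m+2) * ((3:ℝ)^(2*m+1))⁻¹) * hkeyR m
    + (2*π^(2*m+2)*((sQ (m+1):ℚ):ℝ)) * hPinv
    + (2 * (1 - ((3:ℝ)^(2*m+1))⁻¹) * (π^(2*m+2) * ((sQ (m+1):ℚ):ℝ))) * hsignm
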